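/- For every infinite cardinal Γ there exists an almost disjoint family 𝒜 ⊆ [Γ]^Γ (each member of cardinality Γ, pairwise intersections of cardinality < Γ) with |𝒜| > Γ. (Sierpiński) -/

import Mathlib

open Cardinal

section Aux

variable {Γ : Type*} [Infinite Γ]

private lemma sierp_add_one_lt {c : Cardinal} (h : c < #Γ) : c + 1 < #Γ :=
  Cardinal.add_lt_of_lt (Cardinal.aleph0_le_mk Γ) h
    (Cardinal.one_lt_aleph0.trans_le (Cardinal.aleph0_le_mk Γ))

/-- There exists a family of more than `#Γ` functions `Γ → Γ` that pairwise agree on a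
set of size `< #Γ`. -/
private lemma sierp_exists_ED_family :
    ∃ F : Set (Γ → Γ), (∀ f ∈ F, ∀ g ∈ F, f ≠ g → #{a | f a = g a} < #Γ) ∧ #Γ < #F := by
  classical
  obtain ⟨r, wo, hord⟩ := Cardinal.ord_eq Γ
  haveI := wo
  have hseg : ∀ b : Γ, #{a : Γ | r a b} < #Γ := fun b => by
    have := Cardinal.card_typein_lt (r := r) b hord
    rw [Ordinal.card_typein] at this
    exact this
  have hins : ∀ b : Γ, #(insert b {a : Γ | r a b} : Set Γ) < #Γ := fun b =>
    lt_of_le_of_lt (Cardinal.mk_insert_le) (sierp_add_one_lt (hseg b))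
  -- Zorn's lemma on pairwise "eventually different" families
  set S : Set (Set (Γ → Γ)) :=
    {F | ∀ f ∈ F, ∀ g ∈ F, f ≠ g → #{a | f a = g a} < #Γ} with hS
  obtain ⟨F, hFmax⟩ := zorn_subset S (by
    intro c hc hchain
    refine ⟨⋃₀ c, ?_, fun s hs => Set.subset_sUnion_of_mem hs⟩
    rintro f ⟨s, hs, hfs⟩ g ⟨t, ht, hgt⟩ hfg
    rcases hchain.total hs ht with h | h
    · exact hc ht f (h hfs) g hgt hfg
    · exact hc hs f hfs g (h hgt) hfg)
  have hFS : F ∈ S := hFmax.prop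
  refine ⟨F, hFS, ?_⟩
  by_contra hle
  have hFle : #F ≤ #Γ := le_of_not_gt hle
  -- F is nonempty
  have hFne : F.Nonempty := by
    by_contra hne
    rw [Set.not_nonempty_iff_eq_empty] at hne
    have : ({id} : Set (Γ → Γ)) ∈ S := by
      rintro f hf g hg hfg
      simp only [Set.mem_singleton_iff] at hf hg
      exact absurd (hf.trans hg.symm) hfg
    have := hFmax.2 this (by rw [hne]; exact Set.empty_subset _)
    rw [hne] at this
    exact Set.notMem_empty id (this rfl)
  -- surjection from Γ onto F
  obtain ⟨emb⟩ := (Cardinal.le_def ↥F Γ).mp hFle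
  haveI : Nonempty F := hFne.to_subtype
  have hsurj : Function.Surjective (Function.invFun (⇑emb)) :=
    Function.invFun_surjective emb.injective
  set h : Γ → (Γ → Γ) := fun b => (Function.invFun (⇑emb) b).1 with hh
  -- diagonalization
  have havoid : ∀ a : Γ, ∃ x : Γ,
      x ∉ (fun b => h b a) '' (insert a {b : Γ | r b a}) := by
    intro a
    by_contra hno
    push_neg at hno
    have h1 : #Γ ≤ #((fun b => h b a) '' (insert a {b : Γ | r b a})) := by
      have : (Set.univ : Set Γ) ⊆ (fun b => h b a) '' (insert a {b : Γ | r b a}) :=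
        fun x _ => hno x
      simpa using Cardinal.mk_le_mk_of_subset this
    exact absurd (h1.trans_lt (lt_of_le_of_lt Cardinal.mk_image_le (hins a))) (lt_irrefl _)
  choose g hg using havoid
  -- g is eventually different from each h b
  have hdiff : ∀ b a : Γ, r b a → g a ≠ h b a := by
    intro b a hr hgb
    exact hg a ⟨b, Set.mem_insert_of_mem _ hr, hgb.symm⟩
  have hagree : ∀ b : Γ, {a | g a = h b a} ⊆ insert b {a : Γ | r a b} := by
    intro b a ha
    rcases trichotomous_of r a b with h1 | h1 | h1
    · exact Set.mem_insert_of_mem _ h1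
    · exact h1 ▸ Set.mem_insert _ _
    · exact absurd ha (hdiff b a h1)
  have hagree' : ∀ b : Γ, #{a | g a = h b a} < #Γ := fun b =>
    lt_of_le_of_lt (Cardinal.mk_le_mk_of_subset (hagree b)) (hins b)
  -- g a = h a a would contradict: also note g a ≠ h a a (b = a case)
  have hga : ∀ a : Γ, g a ≠ h a a := fun a hgb =>
    hg a ⟨a, Set.mem_insert _ _, hgb.symm⟩
  -- insert g F is still in S
  have hinsS : insert g F ∈ S := by
    rintro f1 hf1 f2 hf2 hne
    rcases Set.mem_insert_iff.mp hf1 with h1 | h1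
    · rcases Set.mem_insert_iff.mp hf2 with h2 | h2
      · exact absurd (h1.trans h2.symm) hne
      · subst h1
        obtain ⟨b, hb⟩ := hsurj ⟨f2, h2⟩
        have hb' : f2 = h b := by
          show f2 = (Function.invFun (⇑emb) b).1
          rw [hb]
        rw [hb']
        exact hagree' b
    · rcases Set.mem_insert_iff.mp hf2 with h2 | h2
      · subst h2
        obtain ⟨b, hb⟩ := hsurj ⟨f1, h1⟩
        have hb' : f1 = h b := by
          show f1 = (Function.invFun (⇑emb) b).1
          rw [hb]
        have heq : {a | f1 a = f2 a} = {a | f2 a = f1 a} := by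
          ext a; exact eq_comm
        rw [heq, hb']
        exact hagree' b
      · exact hFS f1 h1 f2 h2 hne
  -- but g ∉ F, contradicting maximality
  have hgF : g ∉ F := by
    intro hgmem
    obtain ⟨b, hb⟩ := hsurj ⟨g, hgmem⟩
    have hgb : g = h b := by
      show g = (Function.invFun (⇑emb) b).1
      rw [hb]
    -- find a with r b a
    have : ∃ a, r b a := by
      by_contra hno
      push_neg at hno
      have hsub : (Set.univ : Set Γ) ⊆ insert b {a : Γ | r a b} := by
        intro a _
        rcases trichotomous_of r a b with h1 | h1 | h1
        · exact Set.mem_insert_of_mem _ h1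
        · exact h1 ▸ Set.mem_insert _ _
        · exact absurd h1 (hno a)
      have := Cardinal.mk_le_mk_of_subset hsub
      simp only [Cardinal.mk_univ] at this
      exact absurd (this.trans_lt (hins b)) (lt_irrefl _)
    obtain ⟨a, hra⟩ := this
    exact hdiff b a hra (by rw [← hgb])
  have := hFmax.2 hinsS (Set.subset_insert _ _)
  exact hgF (this (Set.mem_insert _ _))

end Aux

/-- Sierpiński's theorem: every infinite cardinal admits an almost disjoint family of
full-sized subsets whose cardinality exceeds that of the index set. -/
theorem sierpinski_almost_disjoint (Γ : Type*) [Infinite Γ] :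
    ∃ 𝒜 : Set (Set Γ), (∀ A ∈ 𝒜, #A = #Γ) ∧
      (∀ A ∈ 𝒜, ∀ B ∈ 𝒜, A ≠ B → #(↥(A ∩ B)) < #Γ) ∧ #Γ < #𝒜 := by
  classical
  obtain ⟨F, hFad, hFcard⟩ := sierp_exists_ED_family (Γ := Γ)
  -- an equiv Γ × Γ ≃ Γ
  have hmk : #(Γ × Γ) = #Γ := by
    have := Cardinal.mul_eq_self (Cardinal.aleph0_le_mk Γ)
    simp only [Cardinal.mk_prod, Cardinal.lift_id] at this ⊢
    exact this
    
  obtain ⟨e⟩ := Cardinal.eq.mp hmk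
  -- graphs of functions
  set graph : (Γ → Γ) → Set (Γ × Γ) := fun f => {p | p.2 = f p.1} with hgraph
  have hgraph_eq : ∀ f : Γ → Γ, graph f = Set.range (fun a => (a, f a)) := by
    intro f; ext ⟨a, b⟩
    constructor
    · rintro hb; exact ⟨a, by simp [Prod.ext_iff]; exact hb.symm⟩
    · rintro ⟨x, hx⟩
      simp only [Prod.mk.injEq] at hx
      simp only [hgraph, Set.mem_setOf_eq, ← hx.1, hx.2.symm]
  have hgraph_card : ∀ f : Γ → Γ, #(graph f) = #Γ := by
    intro f
    rw [hgraph_eq f]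
    exact Cardinal.mk_range_eq _ (fun a b hab => (Prod.ext_iff.mp hab).1
      )
  have hgraph_inj : Function.Injective graph := by
    intro f f' hff
    funext a
    have : (a, f a) ∈ graph f := rfl
    rw [hff] at this
    exact this
  set Φ : (Γ → Γ) → Set Γ := fun f => e '' graph f with hΦ
  have hΦinj : Function.Injective Φ := fun f f' hff =>
    hgraph_inj (Set.image_injective.mpr e.injective hff)
  refine ⟨Φ '' F, ?_, ?_, ?_⟩
  · rintro A ⟨f, _, rfl⟩
    rw [hΦ]
    rw [Cardinal.mk_image_eq e.injective, hgraph_card]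
  · rintro A ⟨f, hf, rfl⟩ B ⟨f', hf', rfl⟩ hAB
    have hff : f ≠ f' := fun hh => hAB (by rw [hh])
    have hint : Φ f ∩ Φ f' = e '' (graph f ∩ graph f') :=
      (Set.image_inter e.injective).symm
    rw [hint, Cardinal.mk_image_eq e.injective]
    -- graph f ∩ graph f' injects into the agreement set
    have hle : #(graph f ∩ graph f' : Set (Γ × Γ)) ≤ #{a | f a = f' a} := by
      refine ⟨⟨fun p => ⟨p.1.1, ?_⟩, ?_⟩⟩
      · obtain ⟨p, hp1, hp2⟩ := p
        exact (hp1.symm.trans hp2 : f p.1 = f' p.1)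
      · rintro ⟨⟨a, b⟩, hb, hb2⟩ ⟨⟨a', c⟩, hc, hc2⟩ hpq
        have haa : a = a' := congrArg Subtype.val hpq
        subst haa
        have hbc : b = c := by
          simp only [hgraph, Set.mem_setOf_eq] at hb hc
          rw [hb, hc]
        exact Subtype.ext (by simp [hbc])
    exact hle.trans_lt (hFad f hf f' hf' hff)
  · rwa [Cardinal.mk_image_eq hΦinj]
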